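/- arXiv:2403.05312 — 2 statements merged into one kernel-verified Lean document; each statement's English description precedes it below -/
import Mathlib

section
/- Let Γ be a discrete group, (Ω,ν) a probability space, Γ ↷σ (Ω,ν) a p.m.p. action and 1 ≤ p < ∞. If c ∈ Z^1(σ;𝕋) is the limit in Z^1(σ;𝕋) of a net of 1-coboundaries, then the isometric representation π_{p,σ,c} of Γ on L^p(Ω,ν) admits a net of almost invariant unit vectors. -/
open MeasureTheory Filter Topology ENNReal

/-- A probability-measure-preserving action of a discrete group `Γ` on `(Ω, ν)`. -/
structure PMPAction (Γ : Type*) [Group Γ] (Ω : Type*) [MeasurableSpace Ω]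
    (ν : MeasureTheory.Measure Ω) where
  act : Γ → Ω → Ω
  act_one : act 1 = id
  act_mul : ∀ s t : Γ, act (s * t) = act s ∘ act t
  measurable_act : ∀ t : Γ, Measurable (act t)
  measurePreserving_act : ∀ t : Γ, MeasurePreserving (act t) ν ν

namespace PMPAction

variable {Γ : Type*} [Group Γ] {Ω : Type*} [MeasurableSpace Ω] {ν : MeasureTheory.Measure Ω}

/-- The translate `t.A` of a set `A`, i.e. the image of `A` under the action of `t`. -/
def smulSet (σ : PMPAction Γ Ω ν) (t : Γ) (A : Set Ω) : Set Ω := σ.act t⁻¹ ⁻¹' A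

/-- Ergodicity: every `Γ`-invariant measurable set is null or co-null. -/
def IsErgodic (σ : PMPAction Γ Ω ν) : Prop :=
  ∀ A : Set Ω, MeasurableSet A → (∀ t : Γ, ν (symmDiff (σ.smulSet t A) A) = 0) →
    ν A = 0 ∨ ν Aᶜ = 0

end PMPAction

/-- The topology of convergence in measure on `L⁰(Ω,ν;𝕋)`. -/
def cimTopology {Ω : Type*} [MeasurableSpace Ω] (ν : MeasureTheory.Measure Ω) :
    TopologicalSpace (Ω →ₘ[ν] Circle) :=
  TopologicalSpace.generateFrom
    {U | ∃ (φ₀ : Ω →ₘ[ν] Circle) (ε : ℝ), 0 < ε ∧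
      U = {φ | ν {ω | ε ≤ ‖(φ ω : ℂ) - (φ₀ ω : ℂ)‖} < ENNReal.ofReal ε}}

/-- The set of `𝕋`-valued 1-cocycles for the action `σ`, inside `L⁰(Ω,ν;𝕋)^Γ`. -/
def Z1set {Γ : Type*} [Group Γ] {Ω : Type*} [MeasurableSpace Ω] {ν : MeasureTheory.Measure Ω}
    (σ : PMPAction Γ Ω ν) : Set (Γ → (Ω →ₘ[ν] Circle)) :=
  {c | ∀ s t : Γ, ⇑(c (s * t)) =ᵐ[ν] fun ω => c s ω * c t (σ.act s⁻¹ ω)}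

/-- The set of `𝕋`-valued 1-coboundaries for the action `σ`. -/
def B1set {Γ : Type*} [Group Γ] {Ω : Type*} [MeasurableSpace Ω] {ν : MeasureTheory.Measure Ω}
    (σ : PMPAction Γ Ω ν) : Set (Γ → (Ω →ₘ[ν] Circle)) :=
  {c | c ∈ Z1set σ ∧ ∃ φ : Ω →ₘ[ν] Circle,
    ∀ t : Γ, ⇑(c t) =ᵐ[ν] fun ω => φ ω * (φ (σ.act t⁻¹ ω))⁻¹}

variable {Γ : Type*} [Group Γ] {Ω : Type*} [MeasurableSpace Ω] {ν : MeasureTheory.Measure Ω}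

universe u v


private lemma aux_eLpNorm_le {Ω : Type*} [MeasurableSpace Ω] {ν : MeasureTheory.Measure Ω}
    [IsProbabilityMeasure ν] {p : ℝ} (hp : 1 ≤ p) {f : Ω → ℂ}
    (hf : StronglyMeasurable f) (hbd : ∀ ω, ‖f ω‖ ≤ 2) {δ : ℝ} (hδ : 0 < δ) :
    eLpNorm f (ENNReal.ofReal p) ν ≤
      ENNReal.ofReal δ + 2 * (ν {ω | δ ≤ ‖f ω‖}) ^ (1 / p) := by
  have hp0 : 0 < p := lt_of_lt_of_le one_pos hp
  set B : Set Ω := {ω | δ ≤ ‖f ω‖} with hBdef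
  have hB : MeasurableSet B :=
    measurableSet_le measurable_const (continuous_norm.measurable.comp hf.measurable)
  have h1 : eLpNorm f (ENNReal.ofReal p) ν ≤
      eLpNorm (fun ω => δ + B.indicator (fun _ => (2:ℝ)) ω) (ENNReal.ofReal p) ν := by
    refine eLpNorm_mono fun ω => ?_
    by_cases h : ω ∈ B
    · rw [Set.indicator_of_mem h, Real.norm_eq_abs, abs_of_nonneg (by linarith)]
      linarith [hbd ω]
    · rw [Set.indicator_of_notMem h, add_zero, Real.norm_eq_abs, abs_of_nonneg hδ.le]
      exact le_of_not_ge h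
  have h2 : eLpNorm (fun ω => δ + B.indicator (fun _ => (2:ℝ)) ω) (ENNReal.ofReal p) ν ≤
      eLpNorm (fun _ : Ω => δ) (ENNReal.ofReal p) ν
        + eLpNorm (B.indicator (fun _ => (2:ℝ))) (ENNReal.ofReal p) ν :=
    eLpNorm_add_le aestronglyMeasurable_const
      ((stronglyMeasurable_const.indicator hB).aestronglyMeasurable)
      (by simpa using ENNReal.ofReal_le_ofReal hp)
  have h3 : eLpNorm (fun _ : Ω => δ) (ENNReal.ofReal p) ν = ENNReal.ofReal δ := by
    rw [eLpNorm_const _ (by simp [ENNReal.ofReal_eq_zero]; linarith)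
      (IsProbabilityMeasure.ne_zero ν)]
    simp [Real.enorm_eq_ofReal hδ.le]
  have h4 : eLpNorm (B.indicator (fun _ => (2:ℝ))) (ENNReal.ofReal p) ν ≤
      2 * (ν B) ^ (1 / p) := by
    refine le_trans (eLpNorm_indicator_const_le _ _) ?_
    rw [ENNReal.toReal_ofReal hp0.le]
    gcongr
    simp [Real.enorm_eq_ofReal]
  calc eLpNorm f (ENNReal.ofReal p) ν ≤ _ := h1
    _ ≤ _ := h2
    _ ≤ ENNReal.ofReal δ + 2 * (ν B) ^ (1 / p) := by rw [h3]; gcongr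

/-- If a 1-cocycle `c ∈ Z¹(σ;𝕋)` is the limit of a net of 1-coboundaries, then the
isometric representation `π_{p,σ,c}` of `Γ` on `L^p(Ω,ν)` admits a net of almost invariant
unit vectors. -/
theorem stmt5 {Γ : Type u} [Group Γ] {Ω : Type v} [MeasurableSpace Ω]
    (ν : MeasureTheory.Measure Ω) [IsProbabilityMeasure ν]
    (σ : PMPAction Γ Ω ν) (p : ℝ) (hp : 1 ≤ p)
    (c : Γ → (Ω →ₘ[ν] Circle)) (hc : c ∈ Z1set σ)
    (hlim : letI : TopologicalSpace (Ω →ₘ[ν] Circle) := cimTopology ν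
      ∃ (ι : Type (max u v)) (l : Filter ι), l.NeBot ∧
        ∃ b : ι → Γ → (Ω →ₘ[ν] Circle), (∀ i, b i ∈ B1set σ) ∧ Tendsto b l (𝓝 c)) :
    haveI : Fact ((1 : ℝ≥0∞) ≤ ENNReal.ofReal p) :=
      ⟨by simpa using ENNReal.ofReal_le_ofReal hp⟩
    ∃ (κ : Type (max u v)) (m : Filter κ), m.NeBot ∧
      ∃ ξ : κ → Lp ℂ (ENNReal.ofReal p) ν,
        (∀ i, ‖ξ i‖ = 1) ∧
        ∀ t : Γ, Tendsto
          (fun i => eLpNorm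
            (fun ω => (c t ω : ℂ) * (ξ i) (σ.act t⁻¹ ω) - (ξ i) ω)
            (ENNReal.ofReal p) ν)
          m (𝓝 0) := by
  obtain ⟨ι, l, hl, b, hb, htend⟩ := hlim
  letI : TopologicalSpace (Ω →ₘ[ν] Circle) := cimTopology ν
  have hp0 : 0 < p := lt_of_lt_of_le one_pos hp
  choose φ hφ using fun i => (hb i).2
  have hsm : ∀ i, StronglyMeasurable (fun ω => (φ i ω : ℂ)) := fun i =>
    continuous_subtype_val.comp_stronglyMeasurable (φ i).stronglyMeasurable
  have hone : ∀ i, eLpNorm (fun ω => (φ i ω : ℂ)) (ENNReal.ofReal p) ν = 1 := by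
    intro i
    have h := eLpNorm_congr_norm_ae (μ := ν) (p := ENNReal.ofReal p)
      (f := fun ω => (φ i ω : ℂ)) (g := fun _ : Ω => (1:ℝ))
      (Eventually.of_forall fun ω => by simp [Circle.norm_coe])
    rw [h, eLpNorm_const _ (by simp [ENNReal.ofReal_eq_zero]; linarith)
      (IsProbabilityMeasure.ne_zero ν)]
    simp
  have hmem : ∀ i, MemLp (fun ω => (φ i ω : ℂ)) (ENNReal.ofReal p) ν := fun i =>
    ⟨(hsm i).aestronglyMeasurable, by rw [hone i]; exact one_lt_top⟩
  refine ⟨ι, l, hl, fun i => (hmem i).toLp _, fun i => ?_, fun t => ?_⟩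
  · rw [Lp.norm_toLp, hone i]; simp
  · rw [ENNReal.tendsto_nhds_zero]
    intro ε hε
    rcases eq_top_or_lt_top ε with rfl | hεtop
    · exact Eventually.of_forall fun _ => le_top
    set η : ℝ≥0∞ := min (ε / 2) ((ε / 2 / 2) ^ p) with hηdef
    have hε4top : ε / 2 / 2 ≠ ⊤ := (ENNReal.div_lt_top (ENNReal.div_lt_top hεtop.ne (by norm_num)).ne (by norm_num)).ne
    have hη0 : 0 < η := lt_min (ENNReal.div_pos hε.ne' (by norm_num))
      (ENNReal.rpow_pos (ENNReal.div_pos (ENNReal.div_pos hε.ne' (by norm_num)).ne' (by norm_num)) hε4top)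
    have hηtop : η ≠ ⊤ := ne_top_of_le_ne_top (ENNReal.div_lt_top hεtop.ne (by norm_num)).ne (min_le_left _ _)
    set δ : ℝ := η.toReal / 2 with hδdef
    have hδ : 0 < δ := by
      have := ENNReal.toReal_pos hη0.ne' hηtop
      positivity
    have hδη : ENNReal.ofReal δ ≤ η := by
      calc ENNReal.ofReal δ ≤ ENNReal.ofReal η.toReal :=
            ENNReal.ofReal_le_ofReal (by rw [hδdef]; linarith [ENNReal.toReal_pos hη0.ne' hηtop])
        _ = η := ENNReal.ofReal_toReal hηtop
    -- eventually close in measure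
    have hUopen : IsOpen {ψ : Ω →ₘ[ν] Circle |
        ν {ω | δ ≤ ‖(ψ ω : ℂ) - (c t ω : ℂ)‖} < ENNReal.ofReal δ} :=
      TopologicalSpace.isOpen_generateFrom_of_mem ⟨c t, δ, hδ, rfl⟩
    have hcU : c t ∈ {ψ : Ω →ₘ[ν] Circle |
        ν {ω | δ ≤ ‖(ψ ω : ℂ) - (c t ω : ℂ)‖} < ENNReal.ofReal δ} := by
      have hempty : {ω | δ ≤ ‖(c t ω : ℂ) - (c t ω : ℂ)‖} = (∅ : Set Ω) := by
        ext ω; simp [sub_self, hδ.not_ge]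
      simp only [Set.mem_setOf_eq, hempty, measure_empty]
      exact ENNReal.ofReal_pos.mpr hδ
    have hevalT : Tendsto (fun i => b i t) l (𝓝 (c t)) :=
      ((continuous_apply t).tendsto c).comp htend
    have hEv : ∀ᶠ i in l,
        ν {ω | δ ≤ ‖(b i t ω : ℂ) - (c t ω : ℂ)‖} < ENNReal.ofReal δ :=
      hevalT (hUopen.mem_nhds hcU)
    filter_upwards [hEv] with i hi
    -- rewrite the integrand
    have hξ : ⇑((hmem i).toLp _) =ᵐ[ν] fun ω => (φ i ω : ℂ) := MemLp.coeFn_toLp _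
    have hcomp : (⇑((hmem i).toLp fun ω => (φ i ω : ℂ)) ∘ σ.act t⁻¹)
        =ᵐ[ν] ((fun ω => (φ i ω : ℂ)) ∘ σ.act t⁻¹) :=
      ae_eq_comp (g := ⇑((hmem i).toLp fun ω => (φ i ω : ℂ)))
        (g' := fun ω => (φ i ω : ℂ)) (σ.measurable_act t⁻¹).aemeasurable
        (by rw [(σ.measurePreserving_act t⁻¹).map_eq]; exact hξ)
    have hbrel : ∀ᵐ ω ∂ν, (b i t) ω * φ i (σ.act t⁻¹ ω) = φ i ω := by
      filter_upwards [hφ i t] with ω h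
      rw [h, inv_mul_cancel_right]
    have heq1 : (fun ω => (c t ω : ℂ) * ((hmem i).toLp _) (σ.act t⁻¹ ω) - ((hmem i).toLp _) ω)
        =ᵐ[ν] fun ω => ((c t ω : ℂ) - (b i t ω : ℂ)) * (φ i (σ.act t⁻¹ ω) : ℂ) := by
      filter_upwards [hξ, hcomp, hbrel] with ω h1 h2 h3
      simp only [Function.comp_apply] at h2
      have h3' : (b i t ω : ℂ) * (φ i (σ.act t⁻¹ ω) : ℂ) = (φ i ω : ℂ) := by
        rw [← Circle.coe_mul, h3]
      simp only [h2, h1, sub_mul, h3']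
    have heq2 : eLpNorm
        (fun ω => (c t ω : ℂ) * ((hmem i).toLp _) (σ.act t⁻¹ ω) - ((hmem i).toLp _) ω)
        (ENNReal.ofReal p) ν
        = eLpNorm (fun ω => (c t ω : ℂ) - (b i t ω : ℂ)) (ENNReal.ofReal p) ν := by
      rw [eLpNorm_congr_ae heq1]
      exact eLpNorm_congr_norm_ae (Eventually.of_forall fun ω => by
        simp [map_mul, Circle.norm_coe])
    rw [heq2]
    have hsm2 : StronglyMeasurable fun ω => (c t ω : ℂ) - (b i t ω : ℂ) :=
      (continuous_subtype_val.comp_stronglyMeasurable (c t).stronglyMeasurable).sub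
        (continuous_subtype_val.comp_stronglyMeasurable (b i t).stronglyMeasurable)
    have hbd : ∀ ω, ‖(c t ω : ℂ) - (b i t ω : ℂ)‖ ≤ 2 := fun ω => by
      have h := norm_sub_le ((c t ω : ℂ)) ((b i t ω : ℂ))
      simp only [Circle.norm_coe] at h
      linarith
    refine le_trans (aux_eLpNorm_le hp hsm2 hbd hδ) ?_
    have hsets : {ω | δ ≤ ‖(c t ω : ℂ) - (b i t ω : ℂ)‖}
        = {ω | δ ≤ ‖(b i t ω : ℂ) - (c t ω : ℂ)‖} := by
      ext ω
      simp only [Set.mem_setOf_eq, norm_sub_rev]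
    have hνB : ν {ω | δ ≤ ‖(c t ω : ℂ) - (b i t ω : ℂ)‖} ≤ (ε / 2 / 2) ^ p := by
      rw [hsets]
      exact hi.le.trans (hδη.trans (min_le_right _ _))
    have hpow : (ν {ω | δ ≤ ‖(c t ω : ℂ) - (b i t ω : ℂ)‖}) ^ (1 / p) ≤ ε / 2 / 2 := by
      calc (ν {ω | δ ≤ ‖(c t ω : ℂ) - (b i t ω : ℂ)‖}) ^ (1 / p)
          ≤ ((ε / 2 / 2) ^ p) ^ (1 / p) := ENNReal.rpow_le_rpow hνB (by positivity)
        _ = ε / 2 / 2 := by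
            rw [← ENNReal.rpow_mul, mul_one_div, div_self hp0.ne', ENNReal.rpow_one]
    calc ENNReal.ofReal δ + 2 * (ν {ω | δ ≤ ‖(c t ω : ℂ) - (b i t ω : ℂ)‖}) ^ (1 / p)
        ≤ ε / 2 + 2 * (ε / 2 / 2) :=
          add_le_add (hδη.trans (min_le_left _ _)) (mul_le_mul_right hpow 2)
      _ = ε / 2 + ε / 2 := by rw [ENNReal.mul_div_cancel' (by norm_num) (by norm_num)]
      _ = ε := ENNReal.add_halves ε
end

section
/- Let (Ω,𝓑,ν) be a diffuse standard probability space and 1 ≤ p < ∞. There exists a surjective linear isometry U of L^p(Ω,𝓑,ν) such that (1) the constant function 1_Ω lies in U(L^p_0(Ω,𝓑,ν)), and (2) the smallest σ-algebra making all functions in U(L^p_0(Ω,𝓑,ν)) measurable is 𝓑 (up to null sets). -/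
open MeasureTheory Filter Topology ENNReal

variable {Ω : Type*} [MeasurableSpace Ω]

/-- The closed subspace `L^p_0(Ω,ν)` of `L^p(Ω,ν)` consisting of functions of mean zero. -/
noncomputable def Lp0 (p : ℝ≥0∞) [Fact (1 ≤ p)] (ν : MeasureTheory.Measure Ω)
    [IsFiniteMeasure ν] : Submodule ℂ (Lp ℂ p ν) where
  carrier := {f | ∫ ω, f ω ∂ν = 0}
  zero_mem' := by
    simp only [Set.mem_setOf_eq]
    rw [integral_congr_ae (Lp.coeFn_zero ℂ p ν)]
    simp
  add_mem' := by
    intro f g hf hg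
    simp only [Set.mem_setOf_eq] at *
    rw [integral_congr_ae (Lp.coeFn_add f g)]
    simp only [Pi.add_apply]
    rw [integral_add ((Lp.memLp f).integrable Fact.out) ((Lp.memLp g).integrable Fact.out),
      hf, hg, add_zero]
  smul_mem' := by
    intro a f hf
    simp only [Set.mem_setOf_eq] at *
    rw [integral_congr_ae (Lp.coeFn_smul a f)]
    simp only [Pi.smul_apply]
    rw [integral_smul, hf, smul_zero]


section CdfAux

open ProbabilityTheory

lemma cdf_cont_of_noAtoms (μ : MeasureTheory.Measure ℝ) [IsProbabilityMeasure μ]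
    [MeasureTheory.NullSingletonClass μ] : Continuous (cdf μ) := by
  rw [continuous_iff_continuousAt]
  intro x
  rw [(cdf μ).mono.continuousAt_iff_leftLim_eq_rightLim, (cdf μ).rightLim_eq]
  have h := (cdf μ).measure_singleton x
  rw [measure_cdf, measure_singleton, eq_comm, ENNReal.ofReal_eq_zero] at h
  have hle : Function.leftLim (cdf μ) x ≤ cdf μ x := (cdf μ).mono.leftLim_le le_rfl
  linarith

lemma exists_quantile_sets {Ω' : Type*} [MeasurableSpace Ω'] [StandardBorelSpace Ω']
    (ν : MeasureTheory.Measure Ω') [IsProbabilityMeasure ν] [MeasureTheory.NullSingletonClass ν] :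
    ∃ A E : Set Ω', MeasurableSet A ∧ MeasurableSet E ∧ E ⊆ A ∧
      ν A = ENNReal.ofReal (1/2) ∧ ν E = ENNReal.ofReal (1/4) := by
  obtain ⟨X, hX⟩ := exists_measurableEmbedding_real Ω'
  set μ := ν.map X with hμdef
  haveI : IsProbabilityMeasure μ := Measure.isProbabilityMeasure_map hX.measurable.aemeasurable
  haveI : MeasureTheory.NullSingletonClass μ := by
    constructor
    intro x
    rw [hμdef, MeasureTheory.Measure.map_apply hX.measurable (measurableSet_singleton x)]
    exact Set.Subsingleton.measure_zero
      (fun a ha b hb => hX.injective (ha.trans hb.symm)) ν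
  have hcont := cdf_cont_of_noAtoms μ
  obtain ⟨a, ha⟩ : ∃ a, cdf μ a < 1/4 :=
    ((tendsto_cdf_atBot (μ := μ)).eventually
      (eventually_lt_nhds (by norm_num : (0:ℝ) < 1/4))).exists
  obtain ⟨b, hb⟩ : ∃ b, 1/2 < cdf μ b :=
    ((tendsto_cdf_atTop (μ := μ)).eventually
      (eventually_gt_nhds (by norm_num : (1/2:ℝ) < 1))).exists
  have hsub : Set.Icc (cdf μ a) (cdf μ b) ⊆ Set.range (cdf μ) :=
    intermediate_value_univ a b hcont
  obtain ⟨t₂, ht₂⟩ := hsub ⟨by linarith, hb.le⟩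
  obtain ⟨t₁, ht₁⟩ := hsub ⟨ha.le, by linarith⟩
  have hle : t₁ ≤ t₂ := by
    by_contra hc
    push_neg at hc
    have := (cdf μ).mono hc.le
    rw [ht₁, ht₂] at this
    norm_num at this
  refine ⟨X ⁻¹' Set.Iic t₂, X ⁻¹' Set.Iic t₁, hX.measurable measurableSet_Iic,
    hX.measurable measurableSet_Iic, Set.preimage_mono (Set.Iic_subset_Iic.2 hle), ?_, ?_⟩
  · rw [← MeasureTheory.Measure.map_apply hX.measurable measurableSet_Iic, ← hμdef,
      ← ofReal_cdf, ht₂]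
  · rw [← MeasureTheory.Measure.map_apply hX.measurable measurableSet_Iic, ← hμdef,
      ← ofReal_cdf, ht₁]

end CdfAux

namespace Stmt9Aux

variable (q : ℝ≥0∞) [Fact (1 ≤ q)] {Ω : Type*} [MeasurableSpace Ω]
  (ν : MeasureTheory.Measure Ω) [IsFiniteMeasure ν]
  (g : Ω → ℂ) (hg : Measurable g) (hgn : ∀ ω, ‖g ω‖ = 1)

include hg hgn

lemma memGF (f : Lp ℂ q ν) : MemLp (fun ω => g ω * f ω) q ν :=
  (Lp.memLp f).of_le (hg.aestronglyMeasurable.mul (Lp.aestronglyMeasurable f))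
    (Filter.Eventually.of_forall fun ω => by rw [norm_mul, hgn, one_mul])

noncomputable def T : Lp ℂ q ν →ₗ[ℂ] Lp ℂ q ν where
  toFun f := (memGF q ν g hg hgn f).toLp _
  map_add' f₁ f₂ := by
    apply Lp.ext
    filter_upwards [MemLp.coeFn_toLp (memGF q ν g hg hgn (f₁ + f₂)),
      Lp.coeFn_add ((memGF q ν g hg hgn f₁).toLp _) ((memGF q ν g hg hgn f₂).toLp _),
      MemLp.coeFn_toLp (memGF q ν g hg hgn f₁), MemLp.coeFn_toLp (memGF q ν g hg hgn f₂),
      Lp.coeFn_add f₁ f₂] with ω h1 h2 h3 h4 h5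
    rw [h1, h2, Pi.add_apply, h3, h4, h5, Pi.add_apply, mul_add]
  map_smul' a f := by
    apply Lp.ext
    filter_upwards [MemLp.coeFn_toLp (memGF q ν g hg hgn (a • f)),
      Lp.coeFn_smul a ((memGF q ν g hg hgn f).toLp _),
      MemLp.coeFn_toLp (memGF q ν g hg hgn f),
      Lp.coeFn_smul a f] with ω h1 h2 h3 h4
    rw [RingHom.id_apply, h1, h2, Pi.smul_apply, h3, h4, Pi.smul_apply, smul_eq_mul,
      smul_eq_mul]
    ring

lemma T_coeFn (f : Lp ℂ q ν) :
    ⇑(T q ν g hg hgn f) =ᵐ[ν] fun ω => g ω * f ω :=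
  MemLp.coeFn_toLp (memGF q ν g hg hgn f)

lemma T_norm (f : Lp ℂ q ν) : ‖T q ν g hg hgn f‖ = ‖f‖ := by
  show ‖(memGF q ν g hg hgn f).toLp _‖ = _
  rw [Lp.norm_toLp _ (memGF q ν g hg hgn f), Lp.norm_def]
  congr 1
  apply eLpNorm_congr_norm_ae
  exact Filter.Eventually.of_forall fun ω => by rw [norm_mul, hgn, one_mul]

lemma T_T (hgu : ∀ ω, g ω * g ω = 1) (f : Lp ℂ q ν) :
    T q ν g hg hgn (T q ν g hg hgn f) = f := by
  apply Lp.ext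
  filter_upwards [T_coeFn q ν g hg hgn (T q ν g hg hgn f), T_coeFn q ν g hg hgn f]
    with ω h1 h2
  rw [h1, h2, ← mul_assoc, hgu, one_mul]

noncomputable def U (hgu : ∀ ω, g ω * g ω = 1) : Lp ℂ q ν ≃ₗᵢ[ℂ] Lp ℂ q ν where
  toLinearEquiv := LinearEquiv.ofLinear (T q ν g hg hgn) (T q ν g hg hgn)
    (LinearMap.ext (T_T q ν g hg hgn hgu)) (LinearMap.ext (T_T q ν g hg hgn hgu))
  norm_map' := T_norm q ν g hg hgn

lemma U_apply (hgu : ∀ ω, g ω * g ω = 1) (f : Lp ℂ q ν) :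
    U q ν g hg hgn hgu f = T q ν g hg hgn f := rfl

end Stmt9Aux

lemma stmt9_dir2 {Ω : Type*} (m₀ : MeasurableSpace Ω) [𝓑 : MeasurableSpace Ω]
    (ν : MeasureTheory.Measure Ω) (g : Ω → ℂ) (A₀ E : Set Ω)
    (hE : MeasurableSet[𝓑] E) (hEA : E ⊆ A₀)
    (hg1 : ∀ ω ∈ A₀, g ω = 1) (hg2 : ∀ ω ∉ A₀, g ω = -1)
    (hgu : ∀ ω, g ω * g ω = 1)
    (hE4 : ((ν E).toReal : ℂ) = 1/4)
    (key : ∀ S : Set Ω, MeasurableSet[𝓑] S → ∃ h : Ω → ℂ, Measurable[m₀] h ∧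
        h =ᵐ[ν] fun ω => g ω * (S.indicator (fun _ => (1:ℂ)) ω - ((ν S).toReal : ℂ))) :
    ∀ A : Set Ω, MeasurableSet[𝓑] A →
      ∃ B : Set Ω, MeasurableSet[m₀] B ∧ ν (symmDiff A B) = 0 := by
  classical
  obtain ⟨φ, hφm, hφ⟩ := key E hE
  set ψ : Ω → ℂ := fun ω => if φ ω = (3/4:ℂ) ∨ φ ω = (-(1/4):ℂ) then (1:ℂ) else -1
    with hψdef
  have hψm : Measurable[m₀] ψ := by
    apply Measurable.ite _ measurable_const measurable_const
    have hset : {ω | φ ω = (3/4:ℂ) ∨ φ ω = (-(1/4):ℂ)}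
        = φ ⁻¹' ({(3/4:ℂ), (-(1/4):ℂ)} : Set ℂ) := by
      ext ω; simp [Set.mem_insert_iff]
    rw [hset]
    exact hφm ((measurableSet_singleton ((-(1/4):ℂ))).insert (3/4:ℂ))
  have hψg : ψ =ᵐ[ν] g := by
    filter_upwards [hφ] with ω hω
    by_cases hA' : ω ∈ A₀
    · have hgval := hg1 ω hA'
      by_cases hEω : ω ∈ E
      · have hφv : φ ω = 3/4 := by
          rw [hω, hgval, Set.indicator_of_mem hEω, hE4]; norm_num
        show (if φ ω = (3/4:ℂ) ∨ φ ω = (-(1/4):ℂ) then (1:ℂ) else -1) = g ω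
        rw [if_pos (Or.inl hφv), hgval]
      · have hφv : φ ω = -(1/4) := by
          rw [hω, hgval, Set.indicator_of_notMem hEω, hE4]; norm_num
        show (if φ ω = (3/4:ℂ) ∨ φ ω = (-(1/4):ℂ) then (1:ℂ) else -1) = g ω
        rw [if_pos (Or.inr hφv), hgval]
    · have hgval := hg2 ω hA'
      have hEω : ω ∉ E := fun h => hA' (hEA h)
      have hφv : φ ω = 1/4 := by
        rw [hω, hgval, Set.indicator_of_notMem hEω, hE4]; norm_num
      have hcond : ¬ (φ ω = (3/4:ℂ) ∨ φ ω = (-(1/4):ℂ)) := by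
        rw [hφv]; norm_num
      show (if φ ω = (3/4:ℂ) ∨ φ ω = (-(1/4):ℂ) then (1:ℂ) else -1) = g ω
      rw [if_neg hcond, hgval]
  intro A hA
  obtain ⟨χ, hχm, hχ⟩ := key A hA
  set c : ℂ := ((ν A).toReal : ℂ) with hcdef
  set θ : Ω → ℂ := fun ω => ψ ω * χ ω + c * (ψ ω * ψ ω) with hθdef
  have hθm : Measurable[m₀] θ := (hψm.mul hχm).add (measurable_const.mul (hψm.mul hψm))
  have hθ : θ =ᵐ[ν] fun ω => A.indicator (fun _ => (1:ℂ)) ω := by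
    filter_upwards [hχ, hψg] with ω h1 h2
    show ψ ω * χ ω + c * (ψ ω * ψ ω) = A.indicator (fun _ => (1:ℂ)) ω
    rw [h1, h2, hgu ω, ← mul_assoc, hgu ω, one_mul, mul_one, sub_add_cancel]
  refine ⟨θ ⁻¹' {1}, hθm (measurableSet_singleton 1), ?_⟩
  have hnull : ν {ω | ¬ θ ω = A.indicator (fun _ => (1:ℂ)) ω} = 0 := ae_iff.mp hθ
  apply measure_mono_null _ hnull
  intro ω hω
  rw [Set.mem_symmDiff] at hω
  rcases hω with ⟨h1, h2⟩ | ⟨h1, h2⟩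
  · simp only [Set.mem_setOf_eq, Set.indicator_of_mem h1]
    intro hc
    exact h2 (by simpa using hc)
  · have hθ1 : θ ω = 1 := by simpa using h1
    simp only [Set.mem_setOf_eq, Set.indicator_of_notMem h2, hθ1]
    norm_num

/-- For a diffuse standard probability space `(Ω,𝓑,ν)` and `1 ≤ p < ∞`, there is a
surjective linear isometry `U` of `L^p(Ω,𝓑,ν)` such that `1_Ω ∈ U(L^p_0(Ω,𝓑,ν))` and the
smallest σ-algebra making all functions in `U(L^p_0(Ω,𝓑,ν))` measurable is `𝓑`, up to
`ν`-null sets. -/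
theorem stmt9 {Ω' : Type*} [𝓑 : MeasurableSpace Ω'] [StandardBorelSpace Ω']
    (ν : MeasureTheory.Measure Ω') [IsProbabilityMeasure ν] [MeasureTheory.NullSingletonClass ν]
    (p : ℝ) (hp : 1 ≤ p) :
    haveI : Fact ((1 : ℝ≥0∞) ≤ ENNReal.ofReal p) :=
      ⟨by simpa using ENNReal.ofReal_le_ofReal hp⟩
    ∃ U : Lp ℂ (ENNReal.ofReal p) ν ≃ₗᵢ[ℂ] Lp ℂ (ENNReal.ofReal p) ν,
      (∃ f ∈ Lp0 (ENNReal.ofReal p) ν, U f = Lp.const (ENNReal.ofReal p) ν (1 : ℂ)) ∧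
      -- the σ-algebra generated by the functions in `U(L^p_0)` agrees with `𝓑`
      -- up to `ν`-null sets
      (letI m₀ : MeasurableSpace Ω' :=
        ⨆ f ∈ (⇑U '' (Lp0 (ENNReal.ofReal p) ν : Set (Lp ℂ (ENNReal.ofReal p) ν))),
          MeasurableSpace.comap (fun ω => f ω) inferInstance
       (∀ A : Set Ω', MeasurableSet[m₀] A →
          ∃ B : Set Ω', MeasurableSet[𝓑] B ∧ ν (symmDiff A B) = 0) ∧
       (∀ A : Set Ω', MeasurableSet[𝓑] A →
          ∃ B : Set Ω', MeasurableSet[m₀] B ∧ ν (symmDiff A B) = 0)) := by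
  classical
  haveI : Fact ((1 : ℝ≥0∞) ≤ ENNReal.ofReal p) :=
    ⟨by simpa using ENNReal.ofReal_le_ofReal hp⟩
  set q : ℝ≥0∞ := ENNReal.ofReal p with hqdef
  obtain ⟨A₀, E, hA₀, hE, hEA, hνA, hνE⟩ := exists_quantile_sets ν
  set g : Ω' → ℂ := fun ω => if ω ∈ A₀ then 1 else -1 with hgdef
  have hg : Measurable g := Measurable.ite hA₀ measurable_const measurable_const
  have hgn : ∀ ω, ‖g ω‖ = 1 := fun ω => by by_cases h : ω ∈ A₀ <;> simp [hgdef, h]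
  have hgu : ∀ ω, g ω * g ω = 1 := fun ω => by by_cases h : ω ∈ A₀ <;> simp [hgdef, h]
  have hg1 : ∀ ω ∈ A₀, g ω = 1 := fun ω h => by simp [hgdef, h]
  have hg2 : ∀ ω ∉ A₀, g ω = -1 := fun ω h => by simp [hgdef, h]
  have hmem0 : ∀ f : Lp ℂ q ν, f ∈ Lp0 q ν ↔ ∫ ω, f ω ∂ν = 0 := fun _ => Iff.rfl
  refine ⟨Stmt9Aux.U q ν g hg hgn hgu, ?_, ?_, ?_⟩
  · -- constant 1 is in the image of Lp0
    have hgmem : MemLp g q ν := MemLp.of_bound hg.aestronglyMeasurable 1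
      (Filter.Eventually.of_forall fun ω => (hgn ω).le)
    have hint : ∫ ω, g ω ∂ν = 0 := by
      have hrepr : g = fun ω => A₀.indicator (fun _ => (2:ℂ)) ω - 1 := by
        funext ω
        by_cases h : ω ∈ A₀ <;> simp [hgdef, h] <;> norm_num
      rw [hrepr, integral_sub ((integrable_const (2:ℂ)).indicator hA₀) (integrable_const 1),
        integral_indicator_const _ hA₀, integral_const, measureReal_def, measureReal_def, hνA, measure_univ,
        ENNReal.toReal_ofReal (by norm_num : (0:ℝ) ≤ 1/2)]
      simp [Complex.real_smul]
    refine ⟨hgmem.toLp g, ?_, ?_⟩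
    · rw [hmem0]
      rw [integral_congr_ae (MemLp.coeFn_toLp hgmem)]
      exact hint
    · apply Lp.ext
      have h1 := Stmt9Aux.T_coeFn q ν g hg hgn (hgmem.toLp g)
      rw [← Stmt9Aux.U_apply q ν g hg hgn hgu] at h1
      filter_upwards [h1, MemLp.coeFn_toLp hgmem, Lp.coeFn_const q ν (1:ℂ)]
        with ω h1 h2 h3
      rw [h1, h2, hgu ω, h3]
      rfl
  · -- m₀ ≤ 𝓑 direction
    intro S hS
    refine ⟨S, ?_, by simp [symmDiff_self]⟩
    have hle : (⨆ f ∈ (⇑(Stmt9Aux.U q ν g hg hgn hgu) ''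
        (Lp0 q ν : Set (Lp ℂ q ν))),
        MeasurableSpace.comap (fun ω => f ω) inferInstance) ≤ 𝓑 :=
      iSup₂_le fun f _ => measurable_iff_comap_le.1 (Lp.stronglyMeasurable f).measurable
    exact hle _ hS
  · -- 𝓑 ≤ m₀ mod null
    have key : ∀ S : Set Ω', MeasurableSet S → ∃ h : Ω' → ℂ,
        Measurable[⨆ f ∈ (⇑(Stmt9Aux.U q ν g hg hgn hgu) ''
          (Lp0 q ν : Set (Lp ℂ q ν))),
          MeasurableSpace.comap (fun ω => f ω) inferInstance] h ∧
        h =ᵐ[ν] fun ω => g ω * (S.indicator (fun _ => (1:ℂ)) ω - ((ν S).toReal : ℂ)) := by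
      intro S hS
      have hFmeas : Measurable (fun ω => S.indicator (fun _ => (1:ℂ)) ω - ((ν S).toReal : ℂ)) :=
        (measurable_const.indicator hS).sub measurable_const
      have hFmem : MemLp (fun ω => S.indicator (fun _ => (1:ℂ)) ω - ((ν S).toReal : ℂ)) q ν := by
        apply MemLp.of_bound hFmeas.aestronglyMeasurable (1 + ‖((ν S).toReal : ℂ)‖)
        apply Filter.Eventually.of_forall
        intro ω
        have hind : ‖S.indicator (fun _ => (1:ℂ)) ω‖ ≤ 1 := by
          by_cases h : ω ∈ S <;> simp [h]
        calc ‖S.indicator (fun _ => (1:ℂ)) ω - ((ν S).toReal : ℂ)‖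
            ≤ ‖S.indicator (fun _ => (1:ℂ)) ω‖ + ‖((ν S).toReal : ℂ)‖ := norm_sub_le _ _
          _ ≤ 1 + ‖((ν S).toReal : ℂ)‖ := add_le_add hind le_rfl
      have hf0 : hFmem.toLp _ ∈ Lp0 q ν := by
        rw [hmem0]
        rw [integral_congr_ae (MemLp.coeFn_toLp hFmem),
          integral_sub ((integrable_const (1:ℂ)).indicator hS)
            (integrable_const ((ν S).toReal : ℂ)),
          integral_indicator_const _ hS, integral_const, measureReal_def, measureReal_def, measure_univ]
        simp [Complex.real_smul]
      refine ⟨fun ω => (Stmt9Aux.U q ν g hg hgn hgu (hFmem.toLp _)) ω, ?_, ?_⟩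
      · rw [measurable_iff_comap_le]
        exact le_biSup (α := MeasurableSpace Ω')
          (fun f : Lp ℂ q ν => MeasurableSpace.comap (fun ω => f ω) inferInstance)
          (⟨_, hf0, rfl⟩ : Stmt9Aux.U q ν g hg hgn hgu (hFmem.toLp _) ∈
            (⇑(Stmt9Aux.U q ν g hg hgn hgu) '' (Lp0 q ν : Set (Lp ℂ q ν))))
      · have h1 := Stmt9Aux.T_coeFn q ν g hg hgn (hFmem.toLp _)
        rw [← Stmt9Aux.U_apply q ν g hg hgn hgu] at h1
        refine h1.trans ?_
        filter_upwards [MemLp.coeFn_toLp hFmem] with ω hω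
        rw [hω]
    have hE4 : ((ν E).toReal : ℂ) = 1/4 := by
      rw [hνE, ENNReal.toReal_ofReal (by norm_num : (0:ℝ) ≤ 1/4)]
      norm_num
    exact stmt9_dir2 _ ν g A₀ E hE hEA hg1 hg2 hgu hE4 key
end
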